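/- Let S be one of the 16 vertically symmetric step sets, so η(x,y) = (1/x, y), and let ξ(x,y) = (x, y_ξ(x,y)) with y_ξ(x,y) = (1/y)·(Σ_{(i,-1)∈S} x^i)/(Σ_{(i,1)∈S} x^i). Then the rational function (x − 1/x)·(y − y_ξ(x,y)) is not identically zero on the curve {(x,y) : K(x,y) = 0}, where K(x,y) = xy(Σ_{(i,j)∈S} x^i y^j − 1/z), for every nonzero z with |z| < 1/|S|. -/

import Mathlib

open Polynomial Finset

private lemma evalP_aux (T : Finset (ℤ × ℤ)) (hT : ∀ q ∈ T, (-1:ℤ) ≤ q.1 ∧ q.1 ≤ 1)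
    (x : ℂ) (hx : x ≠ 0) :
    (∑ q ∈ T, (Polynomial.X : Polynomial ℂ) ^ (q.1 + 1).toNat).eval x
      = x * ∑ q ∈ T, x ^ q.1 := by
  rw [Polynomial.eval_finset_sum, Finset.mul_sum]
  refine Finset.sum_congr rfl fun q hq => ?_
  have h1 : (0:ℤ) ≤ q.1 + 1 := by have := hT q hq; omega
  have h2 : ((q.1 + 1).toNat : ℤ) = q.1 + 1 := Int.toNat_of_nonneg h1
  rw [Polynomial.eval_pow, Polynomial.eval_X, ← zpow_natCast, h2, zpow_add₀ hx, zpow_one]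
  ring

private lemma evalP_one (T : Finset (ℤ × ℤ)) :
    (∑ q ∈ T, (Polynomial.X : Polynomial ℂ) ^ (q.1 + 1).toNat).eval 1 = T.card := by
  rw [Polynomial.eval_finset_sum]
  simp

theorem stmt_15 (S : Finset (ℤ × ℤ))
    (hS : ∀ p ∈ S, p.1 ∈ ({-1, 0, 1} : Finset ℤ) ∧ p.2 ∈ ({-1, 0, 1} : Finset ℤ) ∧ p ≠ (0, 0))
    (hsym : ∀ i j : ℤ, (i, j) ∈ S ↔ (-i, j) ∈ S)
    (hdown : ∃ i, (i, -1) ∈ S) (hup : ∃ i, (i, 1) ∈ S)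
    (z : ℂ) (hz : z ≠ 0) (hzs : ‖z‖ < 1 / (S.card : ℝ)) :
    ∃ x y : ℂ, x ≠ 0 ∧ y ≠ 0 ∧
      (∑ q ∈ S.filter (fun q => q.2 = 1), x ^ q.1) ≠ 0 ∧
      x * y * ((∑ q ∈ S, x ^ q.1 * y ^ q.2) - 1 / z) = 0 ∧
      (x - 1 / x) *
        (y - (1 / y) * (∑ q ∈ S.filter (fun q => q.2 = -1), x ^ q.1) /
          (∑ q ∈ S.filter (fun q => q.2 = 1), x ^ q.1)) ≠ 0 := by
  classical
  set u := S.filter (fun q => q.2 = 1) with hu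
  set d := S.filter (fun q => q.2 = -1) with hd
  set h0 := S.filter (fun q => q.2 = 0) with hh0
  have hx1 : ∀ q ∈ S, (-1:ℤ) ≤ q.1 ∧ q.1 ≤ 1 := by
    intro q hq
    have := (hS q hq).1
    simp only [Finset.mem_insert, Finset.mem_singleton] at this
    rcases this with h | h | h <;> omega
  have hj : ∀ q ∈ S, q.2 = 1 ∨ q.2 = 0 ∨ q.2 = -1 := by
    intro q hq
    have := (hS q hq).2.1
    simp only [Finset.mem_insert, Finset.mem_singleton] at this
    tauto
  -- cardinalities
  have hucard : 0 < u.card := by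
    obtain ⟨i, hi⟩ := hup
    exact Finset.card_pos.2 ⟨(i, 1), by simp [hu, Finset.mem_filter, hi]⟩
  have hdcard : 0 < d.card := by
    obtain ⟨i, hi⟩ := hdown
    exact Finset.card_pos.2 ⟨(i, -1), by simp [hd, Finset.mem_filter, hi]⟩
  have hScard : 0 < S.card := by
    obtain ⟨i, hi⟩ := hup; exact Finset.card_pos.2 ⟨(i, 1), hi⟩
  have hcard : u.card + h0.card + d.card = S.card := by
    rw [hu, hd, hh0, Finset.card_filter, Finset.card_filter, Finset.card_filter,
      Finset.card_eq_sum_ones, ← Finset.sum_add_distrib, ← Finset.sum_add_distrib]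
    refine Finset.sum_congr rfl fun q hq => ?_
    rcases hj q hq with h | h | h <;> simp [h]
  -- w = 1/z bound
  set w : ℂ := z⁻¹ with hwdef
  have hz0 : 0 < ‖z‖ := norm_pos_iff.2 hz
  have hwbig : (S.card : ℝ) < ‖w‖ := by
    have h1 : (S.card : ℝ) * ‖z‖ < 1 := by
      rw [one_div] at hzs
      calc (S.card : ℝ) * ‖z‖ < (S.card : ℝ) * ((S.card : ℝ))⁻¹ := by
            apply mul_lt_mul_of_pos_left hzs
            exact_mod_cast hScard
        _ = 1 := by
            rw [mul_inv_cancel₀]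
            exact_mod_cast hScard.ne'
    have h2 : ‖z‖ * (‖z‖)⁻¹ = 1 := mul_inv_cancel₀ hz0.ne'
    have h3 : (0:ℝ) < (‖z‖)⁻¹ := inv_pos.2 hz0
    rw [hwdef, norm_inv]
    nlinarith [h1, h2, h3]
  -- the polynomials
  set pA : Polynomial ℂ := ∑ q ∈ u, (Polynomial.X : Polynomial ℂ) ^ (q.1 + 1).toNat with hpAdef
  set pB : Polynomial ℂ := ∑ q ∈ h0, (Polynomial.X : Polynomial ℂ) ^ (q.1 + 1).toNat with hpBdef
  set pC : Polynomial ℂ := ∑ q ∈ d, (Polynomial.X : Polynomial ℂ) ^ (q.1 + 1).toNat with hpCdef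
  set pD : Polynomial ℂ := (pB - Polynomial.C w * Polynomial.X) ^ 2
      - Polynomial.C 4 * pA * pC with hpDdef
  have hTu : ∀ q ∈ u, (-1:ℤ) ≤ q.1 ∧ q.1 ≤ 1 := fun q hq => hx1 q (Finset.mem_of_mem_filter q hq)
  have hTd : ∀ q ∈ d, (-1:ℤ) ≤ q.1 ∧ q.1 ≤ 1 := fun q hq => hx1 q (Finset.mem_of_mem_filter q hq)
  have hTh : ∀ q ∈ h0, (-1:ℤ) ≤ q.1 ∧ q.1 ≤ 1 := fun q hq => hx1 q (Finset.mem_of_mem_filter q hq)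
  have hpA0 : pA ≠ 0 := by
    intro h
    have h2 := evalP_one u
    rw [← hpAdef, h] at h2
    rw [Polynomial.eval_zero] at h2
    have : (u.card : ℂ) ≠ 0 := Nat.cast_ne_zero.2 hucard.ne'
    exact this h2.symm
  have hpC0 : pC ≠ 0 := by
    intro h
    have h2 := evalP_one d
    rw [← hpCdef, h] at h2
    rw [Polynomial.eval_zero] at h2
    have : (d.card : ℂ) ≠ 0 := Nat.cast_ne_zero.2 hdcard.ne'
    exact this h2.symm
  have hpD0 : pD ≠ 0 := by
    intro h
    have hev : pD.eval 1 = 0 := by rw [h]; simp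
    rw [hpDdef] at hev
    simp only [Polynomial.eval_sub, Polynomial.eval_pow, Polynomial.eval_mul, Polynomial.eval_C,
      Polynomial.eval_X, mul_one] at hev
    rw [evalP_one u, evalP_one h0, evalP_one d] at hev
    -- ((h0.card : ℂ) - w)^2 = 4 * u.card * d.card
    have heq : ((h0.card : ℂ) - w) ^ 2 = ((4 * u.card * d.card : ℕ) : ℂ) := by
      push_cast
      linear_combination hev
    have habs : ‖(h0.card : ℂ) - w‖ ^ 2 = (4 * u.card * d.card : ℕ) := by
      rw [← norm_pow, heq, Complex.norm_natCast]
    have htri : ‖w‖ ≤ ‖(h0.card : ℂ) - w‖ + (h0.card : ℝ) := by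
      have h1 := norm_add_le (w - (h0.card : ℂ)) ((h0.card : ℂ))
      have h2 : w - (h0.card : ℂ) + (h0.card : ℂ) = w := by ring
      rw [h2, norm_sub_rev w ((h0.card : ℂ)), Complex.norm_natCast] at h1
      exact h1
    have hle : ‖(h0.card : ℂ) - w‖ ≤ (u.card : ℝ) + d.card := by
      have h4 : (0:ℝ) ≤ ‖(h0.card : ℂ) - w‖ := norm_nonneg _
      have h5 : ‖(h0.card : ℂ) - w‖ ^ 2 ≤ ((u.card : ℝ) + d.card) ^ 2 := by
        rw [habs]
        push_cast
        nlinarith [sq_nonneg ((u.card : ℝ) - d.card)]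
      nlinarith [h4, h5, (Nat.cast_nonneg u.card : (0:ℝ) ≤ u.card), (Nat.cast_nonneg d.card : (0:ℝ) ≤ d.card)]
    have : (S.card : ℝ) < S.card := by
      calc (S.card : ℝ) < ‖w‖ := hwbig
        _ ≤ ‖(h0.card : ℂ) - w‖ + h0.card := htri
        _ ≤ ((u.card : ℝ) + d.card) + h0.card := by linarith
        _ = (S.card : ℝ) := by rw [← hcard]; push_cast; ring
    linarith
  -- build the avoidance polynomial
  set P : Polynomial ℂ := Polynomial.X * (Polynomial.X ^ 2 - 1) * pA * pC * pD with hPdef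
  have hP0 : P ≠ 0 := by
    refine mul_ne_zero (mul_ne_zero (mul_ne_zero (mul_ne_zero Polynomial.X_ne_zero ?_) hpA0) hpC0) hpD0
    intro h
    have := congrArg (Polynomial.eval 0) h
    simp at this
  obtain ⟨x, hx⟩ : ∃ x : ℂ, P.eval x ≠ 0 := by
    have hfin := Polynomial.finite_setOf_isRoot hP0
    obtain ⟨x, hx⟩ := (Set.Finite.infinite_compl hfin).nonempty
    exact ⟨x, hx⟩
  rw [hPdef] at hx
  simp only [Polynomial.eval_mul, Polynomial.eval_sub, Polynomial.eval_pow, Polynomial.eval_X,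
    Polynomial.eval_one] at hx
  have hx0 : x ≠ 0 := fun h => hx (by rw [h]; ring)
  have hx2 : x ^ 2 - 1 ≠ 0 := fun h => hx (by rw [h]; ring)
  have hpAx : pA.eval x ≠ 0 := fun h => hx (by rw [h]; ring)
  have hpCx : pC.eval x ≠ 0 := fun h => hx (by rw [h]; ring)
  have hpDx : pD.eval x ≠ 0 := fun h => hx (by rw [h]; ring)
  -- values
  set a : ℂ := ∑ q ∈ u, x ^ q.1 with hadef
  set b0 : ℂ := ∑ q ∈ h0, x ^ q.1 with hb0def
  set c : ℂ := ∑ q ∈ d, x ^ q.1 with hcdef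
  set b : ℂ := b0 - w with hbdef
  have heA : pA.eval x = x * a := evalP_aux u hTu x hx0
  have heB : pB.eval x = x * b0 := evalP_aux h0 hTh x hx0
  have heC : pC.eval x = x * c := evalP_aux d hTd x hx0
  rw [heA] at hpAx
  rw [heC] at hpCx
  have ha : a ≠ 0 := fun h => hpAx (by rw [h, mul_zero])
  have hc : c ≠ 0 := fun h => hpCx (by rw [h, mul_zero])
  have hdisc : b ^ 2 - 4 * a * c ≠ 0 := by
    intro h
    apply hpDx
    rw [hpDdef]
    simp only [Polynomial.eval_sub, Polynomial.eval_pow, Polynomial.eval_mul, Polynomial.eval_C,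
      Polynomial.eval_X, heA, heB, heC]
    have : (x * b0 - w * x) ^ 2 - 4 * (x * a) * (x * c) = x ^ 2 * (b ^ 2 - 4 * a * c) := by
      rw [hbdef]; ring
    rw [this, h, mul_zero]
  -- solve the quadratic
  obtain ⟨y, hy⟩ : ∃ y : ℂ, a * y ^ 2 + b * y + c = 0 := by
    obtain ⟨y, hy⟩ := Complex.exists_root (f := Polynomial.C a * Polynomial.X ^ 2
        + Polynomial.C b * Polynomial.X + Polynomial.C c)
      (by rw [Polynomial.degree_quadratic ha]; norm_num)
    refine ⟨y, ?_⟩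
    have := hy
    simp only [Polynomial.IsRoot, Polynomial.eval_add, Polynomial.eval_mul, Polynomial.eval_pow,
      Polynomial.eval_C, Polynomial.eval_X] at this
    exact this
  have hy0 : y ≠ 0 := by
    intro h
    rw [h] at hy
    simp at hy
    exact hc hy
  -- the sum splits
  have hsum : (∑ q ∈ S, x ^ q.1 * y ^ q.2) = a * y + b0 + c * y⁻¹ := by
    rw [hadef, hb0def, hcdef, hu, hd, hh0, Finset.sum_filter, Finset.sum_filter,
      Finset.sum_filter, Finset.sum_mul, Finset.sum_mul, ← Finset.sum_add_distrib,
      ← Finset.sum_add_distrib]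
    refine Finset.sum_congr rfl fun q hq => ?_
    rcases hj q hq with h | h | h <;> simp [h, zpow_neg, zpow_one]
  refine ⟨x, y, hx0, hy0, ha, ?_, ?_⟩
  · rw [hsum]
    have h1z : (1:ℂ) / z = w := by rw [hwdef, one_div]
    have key : x * y * (a * y + b0 + c * y⁻¹ - w) = x * (a * y ^ 2 + b * y + c) := by
      rw [hbdef]
      field_simp
      ring
    rw [h1z, key, hy, mul_zero]
  · apply mul_ne_zero
    · intro h
      apply hx2
      have h2 : x = 1 / x := sub_eq_zero.mp h
      field_simp at h2
      linear_combination h2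
    · intro h
      have h1 : a * y ^ 2 = c := by
        have h2 : y - (1 / y) * c / a = 0 := h
        field_simp at h2
        linear_combination h2
      have h2 : b * y + 2 * c = 0 := by linear_combination hy - h1
      apply hdisc
      have h3 : (b ^ 2 - 4 * a * c) * c = 0 := by
        linear_combination (a * (b * y - 2 * c)) * h2 - b ^ 2 * h1
      rcases mul_eq_zero.mp h3 with h4 | h4
      · exact h4
      · exact absurd h4 hc
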